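/- Let M₁ be a maximal matching in a (not necessarily bipartite) graph G with |M₁| = (1/2 + c)·μ(G), let S be a set of vertex-disjoint 3-augmenting paths w.r.t. M₁, and let M₂ be a maximal b-matching (b ≥ 1 integer) in a bipartite subgraph B such that each vertex of V(M₁) has capacity 1 and each vertex outside V(M₁) has capacity b, where for every path u'−u−v−v' in S both edges (u,u') and (v,v') belong to B. Then the number of edges (u,v) of M₁ lying on such paths in S whose both endpoints are matched by M₂ is at least |S| − 2|M₁|/b. -/

import Mathlib

variable {V : Type*}

/-- A matching of `G`: a finset of edges of `G` that are pairwise vertex-disjoint. -/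
def IsMatching (G : SimpleGraph V) (M : Finset (Sym2 V)) : Prop :=
  (∀ e ∈ M, e ∈ G.edgeSet) ∧
    ∀ e ∈ M, ∀ f ∈ M, e ≠ f → ∀ v : V, v ∈ e → v ∉ f

/-- A vertex is matched by `M` if it belongs to some edge of `M`. -/
def Matched (M : Finset (Sym2 V)) (v : V) : Prop := ∃ e ∈ M, v ∈ e

/-- A maximal matching: every edge of `G` has a matched endpoint. -/
def IsMaximalMatching (G : SimpleGraph V) (M : Finset (Sym2 V)) : Prop :=
  IsMatching G M ∧ ∀ e ∈ G.edgeSet, ∃ v, v ∈ e ∧ Matched M v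

/-- μ(G): the maximum matching size of `G`. -/
noncomputable def matchNum (G : SimpleGraph V) : ℕ :=
  sSup {n | ∃ M : Finset (Sym2 V), IsMatching G M ∧ M.card = n}

/-- The subgraph of `G` induced by the vertex set `S` (on the same vertex type). -/
def restrictVerts (G : SimpleGraph V) (S : Set V) : SimpleGraph V where
  Adj u v := G.Adj u v ∧ u ∈ S ∧ v ∈ S
  symm := ⟨fun u v h => ⟨h.1.symm, h.2.2, h.2.1⟩⟩
  loopless := ⟨fun u h => G.irrefl h.1⟩

/-- `M` is an ε-approximately maximal matching of `G`: it is maximal in a subgraph of `G`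
obtained by deleting at most `ε * μ(G)` vertices. -/
def IsAMM (G : SimpleGraph V) (ε : ℝ) (M : Finset (Sym2 V)) : Prop :=
  IsMatching G M ∧ ∃ D : Finset V, (D.card : ℝ) ≤ ε * matchNum G ∧
    IsMaximalMatching (restrictVerts G ((↑D : Set V)ᶜ)) M

/-- The four vertices of a (candidate) length-three augmenting path `u' - u - v - v'`,
encoded as the tuple `(u', u, v, v')`. -/
def pathVerts [DecidableEq V] (p : V × V × V × V) : Finset V :=
  {p.1, p.2.1, p.2.2.1, p.2.2.2}

/-- `p = (u', u, v, v')` is a length-three augmenting path for the matching `M` in `G`: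
`u'` and `v'` are unmatched and distinct, `(u,v) ∈ M`, and the outer edges are
edges of `G` outside `M`. -/
def IsAugPath3 (G : SimpleGraph V) (M : Finset (Sym2 V)) (p : V × V × V × V) : Prop :=
  p.1 ≠ p.2.2.2 ∧ ¬ Matched M p.1 ∧ ¬ Matched M p.2.2.2 ∧
  s(p.2.1, p.2.2.1) ∈ M ∧
  s(p.1, p.2.1) ∈ G.edgeSet ∧ s(p.1, p.2.1) ∉ M ∧
  s(p.2.2.1, p.2.2.2) ∈ G.edgeSet ∧ s(p.2.2.1, p.2.2.2) ∉ M

/-- The paths in `P` are pairwise vertex-disjoint. -/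
def PairwiseDisjointPaths [DecidableEq V] (P : Finset (V × V × V × V)) : Prop :=
  ∀ p ∈ P, ∀ q ∈ P, p ≠ q → Disjoint (pathVerts p) (pathVerts q)

def IsBMatching [DecidableEq V] (G : SimpleGraph V) (cap : V → ℕ)
    (M : Multiset (Sym2 V)) : Prop :=
  (∀ e ∈ M, e ∈ G.edgeSet) ∧ ∀ v : V, M.countP (fun e => v ∈ e) ≤ cap v

def IsMaximalBMatching [DecidableEq V] (G : SimpleGraph V) (cap : V → ℕ)
    (M : Multiset (Sym2 V)) : Prop :=
  IsBMatching G cap M ∧ ∀ e ∈ G.edgeSet, ¬ IsBMatching G cap (e ::ₘ M)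

open Classical in
lemma sum_countP_le_card [DecidableEq V] (W : Finset V) (M : Multiset (Sym2 V))
    (h : ∀ e ∈ M, (W.filter (· ∈ e)).card ≤ 1) :
    ∑ w ∈ W, M.countP (fun e => w ∈ e) ≤ Multiset.card M := by
  induction M using Multiset.induction_on with
  | empty => simp
  | cons a s ih =>
    simp only [Multiset.countP_cons, Finset.sum_add_distrib, Multiset.card_cons]
    have h1 : ∑ w ∈ W, (if w ∈ a then 1 else 0) ≤ 1 := by
      rw [← Finset.card_filter]
      exact h a (Multiset.mem_cons_self a s)
    have h2 := ih (fun e he => h e (Multiset.mem_cons_of_mem he))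
    omega

open Classical in
lemma card_le_sum_countP [DecidableEq V] (W : Finset V) (M : Multiset (Sym2 V))
    (h : ∀ e ∈ M, ∃ v ∈ W, v ∈ e) :
    Multiset.card M ≤ ∑ w ∈ W, M.countP (fun e => w ∈ e) := by
  induction M using Multiset.induction_on with
  | empty => simp
  | cons a s ih =>
    simp only [Multiset.countP_cons, Finset.sum_add_distrib, Multiset.card_cons]
    have h1 : 1 ≤ ∑ w ∈ W, (if w ∈ a then 1 else 0) := by
      rw [← Finset.card_filter]
      obtain ⟨v, hv, hva⟩ := h a (Multiset.mem_cons_self a s)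
      exact Finset.card_pos.2 ⟨v, Finset.mem_filter.2 ⟨hv, hva⟩⟩
    have h2 := ih (fun e he => h e (Multiset.mem_cons_of_mem he))
    omega

lemma outer_saturated [DecidableEq V] (B : SimpleGraph V) (cap : V → ℕ)
    (M₂ : Multiset (Sym2 V))
    (hM₂ : IsMaximalBMatching B cap M₂) (o m : V)
    (hcapm : cap m = 1) (he : s(o, m) ∈ B.edgeSet)
    (hum : ¬ ∃ e ∈ M₂, m ∈ e) : cap o ≤ M₂.countP (fun e => o ∈ e) := by
  classical
  have hmax := hM₂.2 _ he
  rw [IsBMatching, not_and_or] at hmax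
  rcases hmax with h | h
  · exact absurd (fun f hf => (Multiset.mem_cons.1 hf).elim (fun h => h ▸ he)
      (fun h => hM₂.1.1 f h)) h
  · push_neg at h
    obtain ⟨x, hx⟩ := h
    rw [Multiset.countP_cons] at hx
    by_cases hxe : x ∈ s(o, m)
    · rcases Sym2.mem_iff.1 hxe with rfl | rfl
      · have : (if x ∈ s(x, m) then 1 else 0) = 1 := by simp
        omega
      · have h0 : M₂.countP (fun e => x ∈ e) = 0 := by
          rw [Multiset.countP_eq_zero]
          exact fun e he' hxe' => hum ⟨e, he', hxe'⟩
        have h1 : (if x ∈ s(o, x) then 1 else 0) = 1 := by simp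
        rw [h0, hcapm, h1] at hx
        omega
    · simp only [hxe, if_false] at hx
      exact absurd (hM₂.1.2 x) (by omega)


theorem many_middle_edges_doubly_matched [Fintype V] [DecidableEq V]
    (G B : SimpleGraph V) (hBG : B ≤ G) (c : ℝ) (b : ℕ) (hb : 1 ≤ b)
    (M₁ : Finset (Sym2 V)) (hM₁ : IsMaximalMatching G M₁)
    (hsize : (M₁.card : ℝ) = (1/2 + c) * matchNum G)
    (S : Finset (V × V × V × V)) (hS : ∀ p ∈ S, IsAugPath3 G M₁ p)
    (hdisj : PairwiseDisjointPaths S)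
    (hBbip : ∀ e ∈ B.edgeSet, ∃ u v : V, e = s(u, v) ∧ Matched M₁ u ∧ ¬ Matched M₁ v)
    (hinB : ∀ p ∈ S, s(p.1, p.2.1) ∈ B.edgeSet ∧ s(p.2.2.1, p.2.2.2) ∈ B.edgeSet)
    (cap : V → ℕ)
    (hcap1 : ∀ v : V, Matched M₁ v → cap v = 1)
    (hcapb : ∀ v : V, ¬ Matched M₁ v → cap v = b)
    (M₂ : Multiset (Sym2 V)) (hM₂ : IsMaximalBMatching B cap M₂)
    (T : Finset (V × V × V × V))
    (hT : ∀ p : V × V × V × V,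
      p ∈ T ↔ p ∈ S ∧ (∃ e ∈ M₂, p.2.1 ∈ e) ∧ (∃ e ∈ M₂, p.2.2.1 ∈ e)) :
    (S.card : ℝ) - 2 * (M₁.card : ℝ) / b ≤ (T.card : ℝ) := by
  classical
  have hTS : T ⊆ S := fun p hp => ((hT p).1 hp).1
  -- Step 1: each blocked path has a saturated outer vertex
  have key : ∀ p ∈ S \ T, ∃ w, w ∈ pathVerts p ∧ ¬ Matched M₁ w ∧
      b ≤ M₂.countP (fun e => w ∈ e) := by
    intro p hp
    obtain ⟨hpS, hpT⟩ := Finset.mem_sdiff.1 hp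
    obtain ⟨hne, hu', hv', hmid, _, _, _, _⟩ := hS p hpS
    have hmu : Matched M₁ p.2.1 := ⟨_, hmid, Sym2.mem_mk_left _ _⟩
    have hmv : Matched M₁ p.2.2.1 := ⟨_, hmid, Sym2.mem_mk_right _ _⟩
    have hnot : ¬ ((∃ e ∈ M₂, p.2.1 ∈ e) ∧ (∃ e ∈ M₂, p.2.2.1 ∈ e)) :=
      fun h => hpT ((hT p).2 ⟨hpS, h⟩)
    rw [not_and_or] at hnot
    rcases hnot with h | h
    · refine ⟨p.1, by simp [pathVerts], hu', ?_⟩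
      have := outer_saturated B cap M₂ hM₂ p.1 p.2.1 (hcap1 _ hmu) (hinB p hpS).1 h
      rwa [hcapb _ hu'] at this
    · refine ⟨p.2.2.2, by simp [pathVerts], hv', ?_⟩
      have hedge : s(p.2.2.2, p.2.2.1) ∈ B.edgeSet := by
        rw [Sym2.eq_swap]; exact (hinB p hpS).2
      have := outer_saturated B cap M₂ hM₂ p.2.2.2 p.2.2.1 (hcap1 _ hmv) hedge h
      rwa [hcapb _ hv'] at this
  -- Step 2: the chosen outer vertices are distinct
  set f : V × V × V × V → V := fun p => if h : p ∈ S \ T then (key p h).choose else p.1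
    with hfdef
  have hf : ∀ p (h : p ∈ S \ T), f p ∈ pathVerts p ∧ ¬ Matched M₁ (f p) ∧
      b ≤ M₂.countP (fun e => f p ∈ e) := by
    intro p h
    simp only [hfdef, dif_pos h]
    exact (key p h).choose_spec
  set W : Finset V := (S \ T).image f with hWdef
  have hWcard : W.card = (S \ T).card := Finset.card_image_of_injOn (by
    intro p hp q hq hpq
    by_contra hne
    have d := hdisj p (Finset.mem_sdiff.1 hp).1 q (Finset.mem_sdiff.1 hq).1 hne
    exact (Finset.disjoint_left.1 d (hf p hp).1) (hpq ▸ (hf q hq).1))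
  have hWn : ∀ w ∈ W, ¬ Matched M₁ w ∧ b ≤ M₂.countP (fun e => w ∈ e) := by
    intro w hw
    obtain ⟨p, hp, rfl⟩ := Finset.mem_image.1 hw
    exact ⟨(hf p hp).2.1, (hf p hp).2.2⟩
  -- Step 3: b * |S \ T| ≤ ∑_{w ∈ W} deg_{M₂}(w)
  have stepA : b * (S \ T).card ≤ ∑ w ∈ W, M₂.countP (fun e => w ∈ e) := by
    calc b * (S \ T).card = ∑ _w ∈ W, b := by
          rw [Finset.sum_const, hWcard, smul_eq_mul, mul_comm]
      _ ≤ _ := Finset.sum_le_sum fun w hw => (hWn w hw).2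
  -- Step 4: ∑_{w ∈ W} deg_{M₂}(w) ≤ |M₂|
  have stepB : ∑ w ∈ W, M₂.countP (fun e => w ∈ e) ≤ Multiset.card M₂ := by
    apply sum_countP_le_card
    intro e he
    obtain ⟨a, b0, rfl, ha, hb0⟩ := hBbip e (hM₂.1.1 e he)
    rw [Finset.card_le_one]
    intro x hx y hy
    obtain ⟨hxW, hxe⟩ := Finset.mem_filter.1 hx
    obtain ⟨hyW, hye⟩ := Finset.mem_filter.1 hy
    have hx' : x = b0 := by
      rcases Sym2.mem_iff.1 hxe with rfl | rfl
      · exact absurd ha (hWn x hxW).1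
      · rfl
    have hy' : y = b0 := by
      rcases Sym2.mem_iff.1 hye with rfl | rfl
      · exact absurd ha (hWn y hyW).1
      · rfl
    rw [hx', hy']
  -- Step 5: |M₂| ≤ 2 |M₁|
  set VM : Finset V := Finset.univ.filter (fun v => Matched M₁ v) with hVMdef
  have stepC1 : Multiset.card M₂ ≤ ∑ v ∈ VM, M₂.countP (fun e => v ∈ e) := by
    apply card_le_sum_countP
    intro e he
    obtain ⟨a, b0, rfl, ha, _⟩ := hBbip e (hM₂.1.1 e he)
    exact ⟨a, Finset.mem_filter.2 ⟨Finset.mem_univ a, ha⟩, Sym2.mem_mk_left _ _⟩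
  have stepC2 : ∑ v ∈ VM, M₂.countP (fun e => v ∈ e) ≤ VM.card := by
    calc ∑ v ∈ VM, M₂.countP (fun e => v ∈ e) ≤ ∑ _v ∈ VM, 1 :=
          Finset.sum_le_sum fun v hv => by
            have h := hM₂.1.2 v
            rwa [hcap1 v (Finset.mem_filter.1 hv).2] at h
      _ = VM.card := by simp
  have stepC3 : VM.card ≤ 2 * M₁.card := by
    have hsub : VM ⊆ M₁.biUnion (fun e => Finset.univ.filter (· ∈ e)) := by
      intro v hv
      obtain ⟨e, he, hve⟩ := (Finset.mem_filter.1 hv).2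
      exact Finset.mem_biUnion.2 ⟨e, he, Finset.mem_filter.2 ⟨Finset.mem_univ v, hve⟩⟩
    have h2 : ∀ e : Sym2 V, (Finset.univ.filter (· ∈ e)).card ≤ 2 := by
      intro e
      induction e using Sym2.inductionOn with
      | hf a b1 =>
        have hsub2 : Finset.univ.filter (· ∈ s(a, b1)) ⊆ {a, b1} := by
          intro x hx
          rcases Sym2.mem_iff.1 (Finset.mem_filter.1 hx).2 with rfl | rfl <;> simp
        exact (Finset.card_le_card hsub2).trans ((Finset.card_insert_le a {b1}).trans
          (by simp))
    calc VM.card ≤ (M₁.biUnion fun e => Finset.univ.filter (· ∈ e)).card :=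
          Finset.card_le_card hsub
      _ ≤ ∑ e ∈ M₁, (Finset.univ.filter (· ∈ e)).card := Finset.card_biUnion_le
      _ ≤ ∑ _e ∈ M₁, 2 := Finset.sum_le_sum fun e _ => h2 e
      _ = 2 * M₁.card := by rw [Finset.sum_const, smul_eq_mul, mul_comm]
  -- Combine
  have hnat : b * (S \ T).card ≤ 2 * M₁.card :=
    stepA.trans (stepB.trans (stepC1.trans (stepC2.trans stepC3)))
  have hb0 : (0 : ℝ) < (b : ℝ) := by exact_mod_cast Nat.lt_of_lt_of_le Nat.zero_lt_one hb
  have hfinal : (((S \ T).card : ℕ) : ℝ) ≤ 2 * (M₁.card : ℝ) / b := by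
    rw [le_div_iff₀ hb0]
    have : (((S \ T).card : ℕ) : ℝ) * b = (b * (S \ T).card : ℕ) := by push_cast; ring
    rw [this]
    exact_mod_cast hnat
  have hcards : (((S \ T).card : ℕ) : ℝ) = (S.card : ℝ) - T.card := by
    rw [Finset.card_sdiff_of_subset hTS, Nat.cast_sub (Finset.card_le_card hTS)]
  linarith [hfinal, hcards.ge]
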